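/- Let (T, V) be a rooted tree-decomposition of a graph G, let t be a node of T, and let P be a path in G that lies entirely in the union of the parts indexed by descendants of t, joins two distinct components of the induced subgraph G[V_t], and is as short as possible with these properties. Then P has exactly two vertices in V_t (its endpoints), and there is a unique child s of t such that all internal vertices of P lie in V_{T_s} \ V_t. -/

import Mathlib

open SimpleGraph

universe u

/-- `x` and `y` are joined by a walk in `G` all of whose vertices lie in `S`. -/
def ConnIn {V : Type u} (G : SimpleGraph V) (S : Set V) (x y : V) : Prop :=
  ∃ p : G.Walk x y, ∀ v ∈ p.support, v ∈ S

/-- `S` is a (nonempty) connected vertex set of `G`, i.e. `G[S]` is connected. -/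
def IsConnSet {V : Type u} (G : SimpleGraph V) (S : Set V) : Prop :=
  S.Nonempty ∧ ∀ x ∈ S, ∀ y ∈ S, ConnIn G S x y

/-- A tree-decomposition of `G` over the tree `T`. -/
structure TreeDecomp {V ι : Type u} (G : SimpleGraph V) (T : SimpleGraph ι) where
  isTree : T.IsTree
  bag : ι → Set V
  exists_bag : ∀ v : V, ∃ t, v ∈ bag t
  exists_bag_adj : ∀ ⦃u v : V⦄, G.Adj u v → ∃ t, u ∈ bag t ∧ v ∈ bag t
  bag_sep : ∀ ⦃t₁ t₃ : ι⦄ (p : T.Walk t₁ t₃), p.IsPath → ∀ t₂ ∈ p.support,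
      bag t₁ ∩ bag t₃ ⊆ bag t₂

/-- The union of the bags `B u` over `u ∈ A`. -/
def unionBags {V ι : Type u} (B : ι → Set V) (A : Set ι) : Set V := ⋃ u ∈ A, B u

/-- `s` is a descendant of `t` in the tree `T` rooted at `r`:
`t` lies on the (unique) `r`–`s` path. -/
def Desc {ι : Type u} (T : SimpleGraph ι) (r t s : ι) : Prop :=
  ∃ p : T.Walk r s, p.IsPath ∧ t ∈ p.support

/-- The set of descendants of `t` (the subtree `T_t`). -/
def descSet {ι : Type u} (T : SimpleGraph ι) (r t : ι) : Set ι := {s | Desc T r t s}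

/-- `s` is a child of `t` in the tree `T` rooted at `r`. -/
def IsChild {ι : Type u} (T : SimpleGraph ι) (r t s : ι) : Prop :=
  T.Adj t s ∧ Desc T r t s

/-- The vertex set of the component of `t₁` in `T` minus the edge `t₁t₂`. -/
def Side {ι : Type u} (T : SimpleGraph ι) (t₁ t₂ : ι) : Set ι :=
  {u | ∃ p : T.Walk u t₁, p.IsPath ∧ t₂ ∉ p.support}

/-- The family of bags `B` is stable: for every tree edge `t₁t₂`, both sides
induce connected subgraphs of `G`. -/
def StableBags {V ι : Type u} (G : SimpleGraph V) (T : SimpleGraph ι) (B : ι → Set V) : Prop :=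
  ∀ ⦃t₁ t₂ : ι⦄, T.Adj t₁ t₂ → IsConnSet G (unionBags B (Side T t₁ t₂))

def TreeDecomp.Stable {V ι : Type u} {G : SimpleGraph V} {T : SimpleGraph ι}
    (td : TreeDecomp G T) : Prop :=
  StableBags G T td.bag

/-- `P` is a `t`-admissible path (w.r.t. the root `r` and bags `B`): a shortest
path lying in `V_{T_t}` joining two distinct components of `G[B t]`. -/
structure IsAdmissible {V ι : Type u} (G : SimpleGraph V) (T : SimpleGraph ι)
    (B : ι → Set V) (r t : ι) {x y : V} (P : G.Walk x y) : Prop where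
  isPath : P.IsPath
  support_sub : ∀ v ∈ P.support, v ∈ unionBags B (descSet T r t)
  fst_mem : x ∈ B t
  snd_mem : y ∈ B t
  not_conn : ¬ ConnIn G (B t) x y
  minimal : ∀ ⦃x' y' : V⦄ (Q : G.Walk x' y'), Q.IsPath →
      (∀ v ∈ Q.support, v ∈ unionBags B (descSet T r t)) →
      x' ∈ B t → y' ∈ B t → ¬ ConnIn G (B t) x' y' → P.length ≤ Q.length

/-- The updated bags obtained by adding the path `P` as in `(*)`:
`W_u = V_u ∪ (V(P) ∩ V_{T_u})` for descendants `u` of `t`, and `W_u = V_u` otherwise. -/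
def updatedBag {V ι : Type u} (T : SimpleGraph ι) (B : ι → Set V) (r t : ι)
    {G : SimpleGraph V} {x y : V} (P : G.Walk x y) (u : ι) : Set V :=
  B u ∪ {v | Desc T r t u ∧ v ∈ P.support ∧ v ∈ unionBags B (descSet T r u)}

/-- The tree-width of `G`: the least `k` such that `G` has a tree-decomposition
all of whose bags have at most `k + 1` vertices. -/
noncomputable def treewidth {V : Type u} (G : SimpleGraph V) : ℕ :=
  sInf {k | ∃ (ι : Type u) (T : SimpleGraph ι) (td : TreeDecomp G T),
    ∀ t, (td.bag t).ncard ≤ k + 1}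

/-- A tree-decomposition is connected if every bag is a connected vertex set. -/
def TreeDecomp.IsConn {V ι : Type u} {G : SimpleGraph V} {T : SimpleGraph ι}
    (td : TreeDecomp G T) : Prop :=
  ∀ t, IsConnSet G (td.bag t)

/-- The connected tree-width of `G`. -/
noncomputable def ctw {V : Type u} (G : SimpleGraph V) : ℕ :=
  sInf {k | ∃ (ι : Type u) (T : SimpleGraph ι) (td : TreeDecomp G T),
    td.IsConn ∧ ∀ t, (td.bag t).ncard ≤ k + 1}

/-- The weak connected tree-width of `G`: the least `k` such that `G` has a
tree-decomposition each of whose bags is contained in a connected set of at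
most `k + 1` vertices. -/
noncomputable def wctw {V : Type u} (G : SimpleGraph V) : ℕ :=
  sInf {k | ∃ (ι : Type u) (T : SimpleGraph ι) (td : TreeDecomp G T),
    ∀ t, ∃ X, td.bag t ⊆ X ∧ IsConnSet G X ∧ X.ncard ≤ k + 1}

/-- The characteristic vector over GF(2) of the edge set of a walk. -/
noncomputable def walkChar {V : Type u} {G : SimpleGraph V} {x y : V}
    (p : G.Walk x y) : Sym2 V → ZMod 2 :=
  fun e => by classical exact if e ∈ p.edges then 1 else 0

/-- The characteristic vectors of the cycles of `G` of length at most `ℓ`. -/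
def cycleChars {V : Type u} (G : SimpleGraph V) (ℓ : ℕ) : Set (Sym2 V → ZMod 2) :=
  {f | ∃ (v : V) (p : G.Walk v v), p.IsCycle ∧ p.length ≤ ℓ ∧ f = walkChar p}

/-- The cycles of length at most `ℓ` generate the cycle space of `G` over GF(2). -/
def GeneratesLE {V : Type u} (G : SimpleGraph V) (ℓ : ℕ) : Prop :=
  ∀ ⦃v : V⦄ (p : G.Walk v v), p.IsCycle →
    walkChar p ∈ Submodule.span (ZMod 2) (cycleChars G ℓ)

/-- `ℓ(G)`: the least `ℓ` such that the cycles of length at most `ℓ`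
generate the cycle space of `G`. -/
noncomputable def ellGraph {V : Type u} (G : SimpleGraph V) : ℕ :=
  sInf {ℓ | GeneratesLE G ℓ}

/-- `Γ` is a set of cycles of `G` generating its cycle space over GF(2). -/
def GeneratesSet {V : Type u} (G : SimpleGraph V) (Γ : Set (Σ v : V, G.Walk v v)) : Prop :=
  (∀ c ∈ Γ, c.2.IsCycle) ∧
  ∀ ⦃v : V⦄ (p : G.Walk v v), p.IsCycle →
    walkChar p ∈ Submodule.span (ZMod 2) {f | ∃ c ∈ Γ, f = walkChar c.2}

/-- A bramble: a collection of connected vertex sets, any two of which have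
connected union. -/
def IsBramble {V : Type u} (G : SimpleGraph V) (B : Set (Set V)) : Prop :=
  (∀ S ∈ B, IsConnSet G S) ∧ ∀ S ∈ B, ∀ S' ∈ B, IsConnSet G (S ∪ S')

/-- `X` is a connected cover of the bramble `B`. -/
def IsConnCover {V : Type u} (G : SimpleGraph V) (B : Set (Set V)) (X : Set V) : Prop :=
  IsConnSet G X ∧ ∀ S ∈ B, (X ∩ S).Nonempty

/-- The connected order of a bramble: the least size of a connected cover. -/
noncomputable def connOrder {V : Type u} (G : SimpleGraph V) (B : Set (Set V)) : ℕ :=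
  sInf {n | ∃ X, IsConnCover G B X ∧ X.ncard = n}

/-- The maximum connected order of a bramble of `G`. -/
noncomputable def cbn {V : Type u} (G : SimpleGraph V) : ℕ :=
  sSup {n | ∃ B, IsBramble G B ∧ connOrder G B = n}

/-- A geodesic cycle: a cycle containing a shortest `G`-path between any two
of its vertices. -/
def IsGeodesicCycle {V : Type u} (G : SimpleGraph V) {v : V} (p : G.Walk v v) : Prop :=
  p.IsCycle ∧ ∀ x ∈ p.support, ∀ y ∈ p.support,
    ∃ q : G.Walk x y, q.length = G.dist x y ∧ ∀ e ∈ q.edges, e ∈ p.edges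

/-- The graph obtained from `K_n` by subdividing every edge exactly `k` times:
the edge between `i < j` is replaced by the path
`i, ((i,j),0), ((i,j),1), …, ((i,j),k-1), j`. -/
def subK (n k : ℕ) : SimpleGraph (Fin n ⊕ ({p : Fin n × Fin n // p.1 < p.2} × Fin k)) :=
  SimpleGraph.fromRel fun u v =>
    match u, v with
    | Sum.inl i, Sum.inl j => i < j ∧ k = 0
    | Sum.inl i, Sum.inr (e, c) =>
        (e.val.1 = i ∧ (c : ℕ) = 0) ∨ (e.val.2 = i ∧ (c : ℕ) = k - 1)
    | Sum.inr (e, c), Sum.inr (e', c') => e = e' ∧ (c' : ℕ) = (c : ℕ) + 1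
    | _, _ => False

section AdmissibleAux

variable {V ι : Type u}

private lemma connIn_trans {G : SimpleGraph V} {S : Set V} {x v y : V}
    (h1 : ConnIn G S x v) (h2 : ConnIn G S v y) : ConnIn G S x y := by
  obtain ⟨p, hp⟩ := h1; obtain ⟨q, hq⟩ := h2
  refine ⟨p.append q, ?_⟩
  intro w hw
  rw [Walk.mem_support_append_iff] at hw
  exact hw.elim (hp w) (hq w)

private lemma childSep {T : SimpleGraph ι} (hT : T.IsTree) {t s s' : ι}
    (hs : T.Adj t s) (hs' : T.Adj t s') (hne : s ≠ s') {u : ι}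
    (w : T.Walk u s) (hw : t ∉ w.support)
    (w' : T.Walk u s') (hw' : t ∉ w'.support) : False := by
  classical
  have hb : t ∉ (w.reverse.append w').support := by
    rw [Walk.mem_support_append_iff]
    push_neg
    refine ⟨?_, hw'⟩
    rw [Walk.support_reverse, List.mem_reverse]
    exact hw
  have hbp : (w.reverse.append w').bypass.IsPath := Walk.bypass_isPath _
  have hbt : t ∉ (w.reverse.append w').bypass.support := fun h =>
    hb (Walk.support_bypass_subset _ h)
  have hp2 : (Walk.cons hs.symm (Walk.cons hs' Walk.nil) : T.Walk s s').IsPath := by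
    simp [Walk.isPath_def, hs.ne', hne, hs'.ne]
  have heq := hT.IsAcyclic.path_unique ⟨(w.reverse.append w').bypass, hbp⟩ ⟨_, hp2⟩
  apply hbt
  have heq' : (w.reverse.append w').bypass = Walk.cons hs.symm (Walk.cons hs' Walk.nil) :=
    congrArg Subtype.val heq
  rw [heq']
  simp

private lemma transferWalk {G : SimpleGraph V} {T : SimpleGraph ι} (hT : T.IsTree)
    (td : TreeDecomp G T) {t s u u' : ι} {v : V}
    (hvu : v ∈ td.bag u) (hvu' : v ∈ td.bag u') (hvt : v ∉ td.bag t)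
    (w : T.Walk u s) (hw : t ∉ w.support) : ∃ w' : T.Walk u' s, t ∉ w'.support := by
  classical
  obtain ⟨q0⟩ := hT.isConnected.preconnected u' u
  by_cases hq : t ∈ q0.bypass.support
  · exact absurd (td.bag_sep q0.bypass (Walk.bypass_isPath _) t hq ⟨hvu', hvu⟩) hvt
  · refine ⟨q0.bypass.append w, ?_⟩
    rw [Walk.mem_support_append_iff]
    push_neg
    exact ⟨hq, hw⟩

private lemma walk_avoid_of_desc {T : SimpleGraph ι} (hT : T.IsTree) {r t s u : ι}
    (hadj : T.Adj t s) (hts : Desc T r t s) (hsu : Desc T r s u) :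
    ∃ w : T.Walk u s, t ∉ w.support := by
  classical
  obtain ⟨p, hp, hsp⟩ := hsu
  obtain ⟨p₂, hp₂, htp₂⟩ := hts
  have hpre : p.takeUntil s hsp = p₂ :=
    congrArg Subtype.val
      (hT.IsAcyclic.path_unique ⟨p.takeUntil s hsp, hp.takeUntil hsp⟩ ⟨p₂, hp₂⟩)
  have htake : t ∈ (p.takeUntil s hsp).support := by rw [hpre]; exact htp₂
  refine ⟨(p.dropUntil s hsp).reverse, ?_⟩
  rw [Walk.support_reverse, List.mem_reverse]
  intro hdrop
  have hnd := hp.support_nodup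
  rw [← p.take_spec hsp, Walk.support_append] at hnd
  have htail : t ∈ (p.dropUntil s hsp).support.tail := by
    rw [Walk.support_eq_cons, List.mem_cons] at hdrop
    rcases hdrop with h | h
    · exact absurd h hadj.ne
    · exact h
  exact (List.nodup_append'.mp hnd).2.2 htake htail

private lemma exists_child_data {G : SimpleGraph V} {T : SimpleGraph ι} (hT : T.IsTree)
    (td : TreeDecomp G T) {r t u : ι}
    (hdu : Desc T r t u) (hut : u ≠ t) :
    ∃ s, T.Adj t s ∧ Desc T r t s ∧ Desc T r s u ∧ ∃ w : T.Walk u s, t ∉ w.support := by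
  classical
  obtain ⟨p, hp, htp⟩ := hdu
  obtain ⟨s, hadj, q', heq⟩ := Walk.exists_eq_cons_of_ne (Ne.symm hut) (p.dropUntil t htp)
  have hnd := hp.support_nodup
  rw [← p.take_spec htp, Walk.support_append] at hnd
  have hstail : s ∈ (p.dropUntil t htp).support.tail := by
    rw [heq, Walk.support_cons]
    exact q'.start_mem_support
  have hsnot : s ∉ (p.takeUntil t htp).support := fun hmem =>
    (List.nodup_append'.mp hnd).2.2 hmem hstail
  have hsp : s ∈ p.support := Walk.support_dropUntil_subset p htp
    (by rw [heq, Walk.support_cons]; exact List.mem_cons_of_mem _ q'.start_mem_support)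
  have hw0path : ((p.takeUntil t htp).concat hadj).IsPath := by
    rw [Walk.isPath_def, Walk.support_concat, List.nodup_append']
    refine ⟨(hp.takeUntil htp).support_nodup, List.nodup_singleton s, ?_⟩
    intro a ha hb
    rw [List.mem_singleton] at hb
    subst hb
    exact hsnot ha
  have hq'path : t ∉ q'.support := by
    have hdp := hp.dropUntil htp
    rw [heq] at hdp
    exact ((Walk.cons_isPath_iff _ _).mp hdp).2
  refine ⟨s, hadj, ⟨(p.takeUntil t htp).concat hadj, hw0path, ?_⟩, ⟨p, hp, hsp⟩,
    q'.reverse, ?_⟩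
  · rw [Walk.support_concat]
    rw [List.mem_append]
    exact Or.inl (p.takeUntil t htp).end_mem_support
  · rw [Walk.support_reverse, List.mem_reverse]
    exact hq'path

private lemma child_eq_of_common {G : SimpleGraph V} {T : SimpleGraph ι} (hT : T.IsTree)
    (td : TreeDecomp G T) {t s s' : ι} {v : V}
    (hs : T.Adj t s) (hs' : T.Adj t s') {u u' : ι}
    (hvu : v ∈ td.bag u) (hvu' : v ∈ td.bag u') (hvt : v ∉ td.bag t)
    (w : T.Walk u s) (hw : t ∉ w.support) (w' : T.Walk u' s') (hw' : t ∉ w'.support) :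
    s = s' := by
  by_contra hne
  obtain ⟨w2, hw2⟩ := transferWalk hT td hvu' hvu hvt w' hw'
  exact childSep hT hs hs' hne w hw w2 hw2

private lemma child_eq_of_adj {G : SimpleGraph V} {T : SimpleGraph ι} (hT : T.IsTree)
    (td : TreeDecomp G T) {t s s' : ι} (hs : T.Adj t s) (hs' : T.Adj t s')
    {a b : V} (hab : G.Adj a b) {u u' : ι} (hau : a ∈ td.bag u) (hbu' : b ∈ td.bag u')
    (hat : a ∉ td.bag t) (hbt : b ∉ td.bag t)
    (w : T.Walk u s) (hw : t ∉ w.support) (w' : T.Walk u' s') (hw' : t ∉ w'.support) :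
    s = s' := by
  obtain ⟨u₃, ha3, hb3⟩ := td.exists_bag_adj hab
  obtain ⟨wa, hwa⟩ := transferWalk hT td hau ha3 hat w hw
  obtain ⟨wb, hwb⟩ := transferWalk hT td hbu' hb3 hbt w' hw'
  by_contra hne
  exact childSep hT hs hs' hne wa hwa wb hwb

private lemma chainK {G : SimpleGraph V} {T : SimpleGraph ι} (hT : T.IsTree)
    (td : TreeDecomp G T) (r t s : ι) (hs : T.Adj t s) {y : V} :
    ∀ {a : V} (Q : G.Walk a y), Q.IsPath →
      (∀ w ∈ Q.support, w ≠ y → w ∉ td.bag t ∧ w ∈ unionBags td.bag (descSet T r t)) →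
      a ≠ y →
      (∃ u, Desc T r s u ∧ a ∈ td.bag u ∧ ∃ w : T.Walk u s, t ∉ w.support) →
      ∀ w ∈ Q.support, w ≠ y →
        ∃ u, Desc T r s u ∧ w ∈ td.bag u ∧ ∃ ww : T.Walk u s, t ∉ ww.support := by
  intro a Q
  induction Q with
  | nil => intro _ _ hay _; exact absurd rfl hay
  | @cons a b c h Q ih =>
    intro hQp hsupp hay hPa w hw hwy
    rw [Walk.support_cons, List.mem_cons] at hw
    rcases hw with rfl | hw
    · exact hPa
    · by_cases hby : b = c
      · subst hby
        have hnil : Q = Walk.nil := Walk.isPath_iff_eq_nil.mp hQp.of_cons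
        rw [hnil] at hw
        simp at hw
        exact absurd hw hwy
      · have hbQ : b ∈ (Walk.cons h Q).support := by simp
        obtain ⟨hbt, hbd⟩ := hsupp b hbQ hby
        simp only [unionBags, Set.mem_iUnion] at hbd
        obtain ⟨u₀, hu₀, hbu₀⟩ := hbd
        have hu₀t : u₀ ≠ t := fun he => hbt (he ▸ hbu₀)
        obtain ⟨s₂, hs₂adj, _, hs₂u₀, w₂, hw₂⟩ := exists_child_data hT td hu₀ hu₀t
        obtain ⟨ua, hua, haua, wa, hwa⟩ := hPa
        have hat : a ∉ td.bag t := (hsupp a (by simp) hay).1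
        have hss : s = s₂ := child_eq_of_adj hT td hs hs₂adj h haua hbu₀ hat hbt wa hwa w₂ hw₂
        subst hss
        exact ih hQp.of_cons (fun w hw hwy => hsupp w (by simp [hw]) hwy) hby
          ⟨u₀, hs₂u₀, hbu₀, w₂, hw₂⟩ w hw hwy

end AdmissibleAux

/-- a `t`-admissible path has exactly two vertices in `V_t`
(its endpoints), and there is a unique child `s` of `t` such that all its
internal vertices lie in `V_{T_s} \ V_t`. -/
theorem admissible_path_shape {V ι : Type u} (G : SimpleGraph V) (T : SimpleGraph ι)
    (td : TreeDecomp G T) (r t : ι) {x y : V} (P : G.Walk x y)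
    (hP : IsAdmissible G T td.bag r t P) :
    (∀ v ∈ P.support, v ∈ td.bag t → v = x ∨ v = y) ∧
    ∃! s : ι, IsChild T r t s ∧
      ∀ v ∈ P.support, v ≠ x → v ≠ y →
        v ∈ unionBags td.bag (descSet T r s) ∧ v ∉ td.bag t := by
  classical
  have hT := td.isTree
  have key1 : ∀ v ∈ P.support, v ∈ td.bag t → v = x ∨ v = y := by
    intro v hv hvt
    by_contra hcon
    push_neg at hcon
    obtain ⟨hvx, hvy⟩ := hcon
    have hlen : (P.takeUntil v hv).length + (P.dropUntil v hv).length = P.length := by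
      rw [← Walk.length_append, P.take_spec hv]
    have htake_pos : 0 < (P.takeUntil v hv).length := by
      rcases Nat.eq_zero_or_pos (P.takeUntil v hv).length with h0 | h
      · exact absurd (Walk.eq_of_length_eq_zero h0).symm hvx
      · exact h
    have hdrop_pos : 0 < (P.dropUntil v hv).length := by
      rcases Nat.eq_zero_or_pos (P.dropUntil v hv).length with h0 | h
      · exact absurd (Walk.eq_of_length_eq_zero h0) hvy
      · exact h
    by_cases h1 : ConnIn G (td.bag t) x v
    · by_cases h2 : ConnIn G (td.bag t) v y
      · exact hP.not_conn (connIn_trans h1 h2)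
      · have hm := hP.minimal (P.dropUntil v hv) (hP.isPath.dropUntil hv)
          (fun w hw => hP.support_sub w (Walk.support_dropUntil_subset _ hv hw))
          hvt hP.snd_mem h2
        omega
    · have hm := hP.minimal (P.takeUntil v hv) (hP.isPath.takeUntil hv)
        (fun w hw => hP.support_sub w (Walk.support_takeUntil_subset _ hv hw))
        hP.fst_mem hvt h1
      omega
  refine ⟨key1, ?_⟩
  cases P with
  | nil =>
    refine absurd ⟨Walk.nil, ?_⟩ hP.not_conn
    intro v hv
    simp only [Walk.support_nil, List.mem_singleton] at hv
    subst hv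
    exact hP.fst_mem
  | cons h P' =>
    rename_i b
    cases P' with
    | nil =>
      refine absurd ⟨Walk.cons h Walk.nil, ?_⟩ hP.not_conn
      intro v hv
      simp only [Walk.support_cons, Walk.support_nil, List.mem_cons,
        List.mem_singleton] at hv
      rcases hv with rfl | rfl | hv
      · exact hP.fst_mem
      · exact hP.snd_mem
      · exact absurd hv List.not_mem_nil
    | cons h' P'' =>
      rename_i c
      -- the main case: P = cons h (cons h' P''), second vertex b
      have hPp : (Walk.cons h (Walk.cons h' P'')).IsPath := hP.isPath
      rw [Walk.cons_isPath_iff] at hPp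
      obtain ⟨hQp, hxQ⟩ := hPp
      have hby : b ≠ y := by
        intro he
        subst he
        have := Walk.isPath_iff_eq_nil.mp hQp
        simp at this
      have hbx : b ≠ x := by
        intro he
        subst he
        exact hxQ (Walk.start_mem_support _)
      have hbmem : b ∈ (Walk.cons h (Walk.cons h' P'')).support := by simp
      have hbt : b ∉ td.bag t := by
        intro hb
        rcases key1 b hbmem hb with rfl | rfl
        · exact hbx rfl
        · exact hby rfl
      have hbd := hP.support_sub b hbmem
      simp only [unionBags, Set.mem_iUnion] at hbd
      obtain ⟨u₀, hu₀, hbu₀⟩ := hbd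
      have hu₀t : u₀ ≠ t := fun he => hbt (he ▸ hbu₀)
      obtain ⟨s, hsadj, hsdesc, hsu₀, w₀, hw₀⟩ := exists_child_data hT td hu₀ hu₀t
      have hinner : ∀ w ∈ (Walk.cons h' P'').support, w ≠ y →
          w ∉ td.bag t ∧ w ∈ unionBags td.bag (descSet T r t) := by
        intro w hw hwy
        have hwP : w ∈ (Walk.cons h (Walk.cons h' P'')).support := by
          rw [Walk.support_cons]
          exact List.mem_cons_of_mem _ hw
        have hwx : w ≠ x := fun he => hxQ (he ▸ hw)
        refine ⟨?_, hP.support_sub w hwP⟩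
        intro hwt
        rcases key1 w hwP hwt with rfl | rfl
        · exact hwx rfl
        · exact hwy rfl
      have hchain := chainK hT td r t s hsadj (Walk.cons h' P'') hQp hinner hby
        ⟨u₀, hsu₀, hbu₀, w₀, hw₀⟩
      refine ⟨s, ⟨⟨hsadj, hsdesc⟩, ?_⟩, ?_⟩
      · intro v hv hvx hvy
        have hvQ : v ∈ (Walk.cons h' P'').support := by
          rw [Walk.support_cons, List.mem_cons] at hv
          rcases hv with rfl | hv
          · exact absurd rfl hvx
          · exact hv
        obtain ⟨u, hdesc, hvb, _⟩ := hchain v hvQ hvy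
        constructor
        · simp only [unionBags, Set.mem_iUnion]
          exact ⟨u, hdesc, hvb⟩
        · intro hvt
          rcases key1 v (by rw [Walk.support_cons]; exact List.mem_cons_of_mem _ hvQ) hvt
            with rfl | rfl
          · exact hvx rfl
          · exact hvy rfl
      · rintro s' ⟨⟨hs'adj, hs'desc⟩, hprop'⟩
        obtain ⟨hbmem', hbt'⟩ := hprop' b hbmem hbx hby
        simp only [unionBags, Set.mem_iUnion] at hbmem'
        obtain ⟨u', hdes', hbu'⟩ := hbmem'
        obtain ⟨w', hw'⟩ := walk_avoid_of_desc hT hs'adj hs'desc hdes'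
        exact child_eq_of_common hT td hs'adj hsadj hbu' hbu₀ hbt w' hw' w₀ hw₀
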